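/- Fix t ∈ ℕ. Let f_b(s) = σ(s + b) with b < 0. Then as b → −∞, the fraction of the Gaussian L² mass of f_b in Hermite degrees ≤ t vanishes: (Σ_{k=0}^t ⟨f_b, H_k/√(k!)⟩_N²) / ‖f_b‖_N² → 0. -/

import Mathlib

open MeasureTheory ProbabilityTheory Real Filter

noncomputable def phi (t : ℝ) : ℝ := (Real.sqrt (2 * Real.pi))⁻¹ * Real.exp (-t ^ 2 / 2)

noncomputable def Phi (b : ℝ) : ℝ := ∫ t in Set.Iic b, phi t


noncomputable def relu (z : ℝ) : ℝ := max z 0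

open Set Polynomial

lemma phi_pos (x : ℝ) : 0 < phi x := by
  unfold phi
  positivity

lemma phi_cont : Continuous phi := by
  unfold phi
  fun_prop

lemma relu_cont : Continuous relu := continuous_id.max continuous_const

lemma relu_nonneg (x : ℝ) : 0 ≤ relu x := le_max_right _ _

lemma relu_sq_le (x : ℝ) : relu x ^ 2 ≤ x ^ 2 := by
  rcases le_or_gt x 0 with h | h
  · simp [relu, max_eq_right h, sq_nonneg]
  · simp [relu, max_eq_left h.le]

lemma integrable_pow_phi (n : ℕ) : Integrable (fun x : ℝ => x ^ n * phi x) := by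
  have h : Integrable (fun x : ℝ => x ^ (n : ℝ) * Real.exp (-(1/2 : ℝ) * x ^ 2)) :=
    integrable_rpow_mul_exp_neg_mul_sq (by norm_num)
      (by exact_mod_cast lt_of_lt_of_le neg_one_lt_zero (Nat.cast_nonneg n))
  have h2 := h.const_mul ((Real.sqrt (2 * Real.pi))⁻¹)
  refine h2.congr ?_
  filter_upwards with x
  rw [Real.rpow_natCast]
  unfold phi
  ring_nf

lemma integrable_poly_phi (p : Polynomial ℝ) :
    Integrable (fun x : ℝ => p.eval x * phi x) := by
  have : (fun x : ℝ => p.eval x * phi x)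
      = fun x => ∑ i ∈ Finset.range (p.natDegree + 1), p.coeff i * (x ^ i * phi x) := by
    funext x
    rw [Polynomial.eval_eq_sum_range, Finset.sum_mul]
    simp [mul_assoc]
  rw [this]
  exact integrable_finset_sum _ fun i _ => (integrable_pow_phi i).const_mul _

lemma integrable_relu_sq (b : ℝ) :
    Integrable (fun z : ℝ => relu (z + b) ^ 2 * phi z) := by
  have hb : Integrable (fun z : ℝ => ((X + C b) * (X + C b) : Polynomial ℝ).eval z * phi z) :=
    integrable_poly_phi _
  have hb' : Integrable (fun z : ℝ => (z + b) ^ 2 * phi z) := by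
    refine hb.congr ?_
    filter_upwards with z
    simp [sq]
  refine Integrable.mono' hb' ?_ ?_
  · exact (((relu_cont.comp (continuous_id.add continuous_const)).pow 2).mul
      phi_cont).aestronglyMeasurable
  · filter_upwards with z
    rw [Real.norm_of_nonneg (mul_nonneg (pow_nonneg (relu_nonneg _) 2) (phi_pos z).le)]
    exact mul_le_mul_of_nonneg_right (relu_sq_le _) (phi_pos z).le

lemma integrable_hermite_sq (k : ℕ) (c : ℝ) :
    Integrable (fun z : ℝ => ((Polynomial.aeval z (Polynomial.hermite k)) / c) ^ 2 * phi z) := by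
  set q : Polynomial ℝ := (Polynomial.hermite k).map (Int.castRingHom ℝ) with hq
  have hev : ∀ z : ℝ, Polynomial.aeval z (Polynomial.hermite k) = q.eval z := by
    intro z
    rw [hq, Polynomial.aeval_def, Polynomial.eval₂_eq_eval_map]
    norm_num
  have := (integrable_poly_phi (q * q)).const_mul ((c⁻¹) ^ 2)
  refine this.congr ?_
  filter_upwards with z
  rw [hev z]
  simp [div_pow, sq]
  ring

lemma coeff_sq_le (b : ℝ) (k : ℕ) (c : ℝ) :
    (∫ z, relu (z + b) * (Polynomial.aeval z (Polynomial.hermite k)) / c * phi z) ^ 2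
    ≤ (∫ z, relu (z + b) ^ 2 * phi z) *
      (∫ z in Ici (-b), ((Polynomial.aeval z (Polynomial.hermite k) : ℝ) / c) ^ 2 * phi z) := by
  set f : ℝ → ℝ := fun z => relu (z + b) * Real.sqrt (phi z) with hf
  set g : ℝ → ℝ := fun z =>
    (Ici (-b)).indicator (fun z => (Polynomial.aeval z (Polynomial.hermite k) : ℝ) / c) z
      * Real.sqrt (phi z) with hg
  have hsq : ∀ z, Real.sqrt (phi z) * Real.sqrt (phi z) = phi z :=
    fun z => Real.mul_self_sqrt (phi_pos z).le
  have hfg : ∀ z, relu (z + b) * (Polynomial.aeval z (Polynomial.hermite k) : ℝ) / c * phi z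
      = f z * g z := by
    intro z
    by_cases hz : z ∈ Ici (-b)
    · simp only [hf, hg, indicator_of_mem hz]
      have h2 : relu (z + b) * Real.sqrt (phi z) *
          ((Polynomial.aeval z (Polynomial.hermite k) : ℝ) / c * Real.sqrt (phi z))
          = relu (z + b) * (Polynomial.aeval z (Polynomial.hermite k) : ℝ) / c *
            (Real.sqrt (phi z) * Real.sqrt (phi z)) := by ring
      rw [h2, hsq z]
    · have hz' : z + b ≤ 0 := by simp only [mem_Ici, not_le] at hz; linarith
      have hr : relu (z + b) = 0 := max_eq_right hz'
      simp [hf, hg, indicator_of_notMem hz, hr]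
  have hfm : AEStronglyMeasurable f volume :=
    ((relu_cont.comp (continuous_id.add continuous_const)).mul
      (Real.continuous_sqrt.comp phi_cont)).aestronglyMeasurable
  have hgm : AEStronglyMeasurable g volume := by
    refine AEStronglyMeasurable.mul ?_ (Real.continuous_sqrt.comp phi_cont).aestronglyMeasurable
    refine (StronglyMeasurable.indicator ?_ measurableSet_Ici).aestronglyMeasurable
    exact Continuous.stronglyMeasurable (((Polynomial.hermite k).continuous_aeval).div_const c)
  have hf2 : Integrable (fun z => f z ^ 2) := by
    refine (integrable_relu_sq b).congr ?_
    filter_upwards with z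
    simp [hf, mul_pow, Real.sq_sqrt (phi_pos z).le]
  have hg2eq : ∀ z, g z ^ 2 = (Ici (-b)).indicator
      (fun z => ((Polynomial.aeval z (Polynomial.hermite k) : ℝ) / c) ^ 2 * phi z) z := by
    intro z
    by_cases hz : z ∈ Ici (-b)
    · simp [hg, indicator_of_mem hz, mul_pow, Real.sq_sqrt (phi_pos z).le]
    · simp [hg, indicator_of_notMem hz]
  have hg2 : Integrable (fun z => g z ^ 2) := by
    have hm : AEStronglyMeasurable (fun z => g z ^ 2) volume := by
      simpa [sq, Pi.mul_def] using hgm.mul hgm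
    refine Integrable.mono' (integrable_hermite_sq k c) hm ?_
    filter_upwards with z
    rw [Real.norm_of_nonneg (sq_nonneg _), hg2eq z]
    by_cases hz : z ∈ Ici (-b)
    · simp [indicator_of_mem hz]
    · simp only [indicator_of_notMem hz]
      exact mul_nonneg (sq_nonneg _) (phi_pos z).le
  have hfL : MemLp f (ENNReal.ofReal 2) volume := by
    rw [ENNReal.ofReal_ofNat]
    exact (memLp_two_iff_integrable_sq hfm).2 hf2
  have hgL : MemLp g (ENNReal.ofReal 2) volume := by
    rw [ENNReal.ofReal_ofNat]
    exact (memLp_two_iff_integrable_sq hgm).2 hg2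
  have hpq : Real.HolderConjugate 2 2 := ⟨by norm_num, by norm_num, by norm_num⟩
  have H := MeasureTheory.integral_mul_norm_le_Lp_mul_Lq hpq hfL hgL
  set A := ∫ z, f z ^ 2 with hA
  set B := ∫ z, g z ^ 2 with hB
  have hA0 : 0 ≤ A := integral_nonneg fun z => sq_nonneg _
  have hB0 : 0 ≤ B := integral_nonneg fun z => sq_nonneg _
  have hnormsq : ∀ u : ℝ, ‖u‖ ^ (2:ℝ) = u ^ 2 := by
    intro u
    rw [show ((2:ℝ)) = ((2:ℕ):ℝ) by norm_num, Real.rpow_natCast, Real.norm_eq_abs, sq_abs]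
  have hAeq : (∫ z, ‖f z‖ ^ (2:ℝ)) = A := by
    rw [hA]; congr 1; funext z; exact hnormsq _
  have hBeq : (∫ z, ‖g z‖ ^ (2:ℝ)) = B := by
    rw [hB]; congr 1; funext z; exact hnormsq _
  rw [hAeq, hBeq] at H
  have habs : |∫ z, f z * g z| ≤ A ^ (1/2:ℝ) * B ^ (1/2:ℝ) := by
    calc |∫ z, f z * g z| ≤ ∫ z, ‖f z * g z‖ := by
          rw [← Real.norm_eq_abs]
          exact norm_integral_le_integral_norm _
      _ = ∫ z, ‖f z‖ * ‖g z‖ := by simp [norm_mul]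
      _ ≤ A ^ (1/2:ℝ) * B ^ (1/2:ℝ) := H
  have hintrw : (∫ z, relu (z + b) * (Polynomial.aeval z (Polynomial.hermite k)) / c * phi z)
      = ∫ z, f z * g z := by
    congr 1; funext z; exact hfg z
  have hAB : (A ^ (1/2:ℝ) * B ^ (1/2:ℝ)) ^ 2 = A * B := by
    rw [mul_pow, ← Real.rpow_natCast (A ^ (1/2:ℝ)) 2, ← Real.rpow_natCast (B ^ (1/2:ℝ)) 2,
      ← Real.rpow_mul hA0, ← Real.rpow_mul hB0]
    norm_num
  have hfinal : (∫ z, f z * g z) ^ 2 ≤ A * B := by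
    rw [← sq_abs, ← hAB]
    exact pow_le_pow_left₀ (abs_nonneg _) habs 2
  have hAD : A = ∫ z, relu (z + b) ^ 2 * phi z := by
    rw [hA]; congr 1; funext z
    simp [hf, mul_pow, Real.sq_sqrt (phi_pos z).le]
  have hBT : B = ∫ z in Ici (-b),
      ((Polynomial.aeval z (Polynomial.hermite k) : ℝ) / c) ^ 2 * phi z := by
    have h1 : (∫ z, g z ^ 2) = ∫ z, (Ici (-b)).indicator
        (fun z => ((Polynomial.aeval z (Polynomial.hermite k) : ℝ) / c) ^ 2 * phi z) z := by
      congr 1; funext z; exact hg2eq z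
    rw [hB, h1, integral_indicator measurableSet_Ici]
  rw [hintrw, ← hAD, ← hBT]
  exact hfinal

lemma tail_tendsto {w : ℝ → ℝ} (hw : Integrable w) :
    Tendsto (fun a : ℝ => ∫ x in Ici a, w x) atTop (nhds 0) := by
  have h := tendsto_setIntegral_of_antitone (s := fun a : ℝ => Ici a)
    (fun a => measurableSet_Ici) (fun a a' haa' => Ici_subset_Ici.2 haa')
    ⟨0, hw.integrableOn⟩
  have hempty : (⋂ a : ℝ, Ici a) = (∅ : Set ℝ) := by
    apply eq_empty_of_forall_notMem
    intro x hx
    have h1 : x ∈ Ici (x + 1) := mem_iInter.1 hx (x + 1)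
    rw [mem_Ici] at h1
    linarith
  rw [hempty] at h
  simpa using h


/-- For any fixed t, as b → −∞ the fraction of the Gaussian L² mass of σ(·+b) in
Hermite degrees ≤ t vanishes. -/
theorem stmt_17 (t : ℕ) :
    Tendsto (fun b : ℝ =>
      (∑ k ∈ Finset.range (t + 1),
        (∫ z, relu (z + b) * (Polynomial.aeval z (Polynomial.hermite k))
            / Real.sqrt (Nat.factorial k) * phi z) ^ 2)
      / (∫ z, (relu (z + b)) ^ 2 * phi z)) atBot (nhds 0) := by
  set T : ℕ → ℝ → ℝ := fun k b => ∫ z in Ici (-b),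
    ((Polynomial.aeval z (Polynomial.hermite k) : ℝ) / Real.sqrt (Nat.factorial k)) ^ 2 * phi z
    with hT
  set G : ℝ → ℝ := fun b => ∑ k ∈ Finset.range (t + 1), T k b with hGdef
  have hTnonneg : ∀ k b, 0 ≤ T k b := fun k b =>
    setIntegral_nonneg measurableSet_Ici fun z _ => mul_nonneg (sq_nonneg _) (phi_pos z).le
  have hG0 : Tendsto G atBot (nhds 0) := by
    rw [show (0:ℝ) = ∑ k ∈ Finset.range (t + 1), (0:ℝ) by simp]
    apply tendsto_finset_sum
    intro k _
    exact (tail_tendsto (integrable_hermite_sq k (Real.sqrt (Nat.factorial k)))).comp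
      tendsto_neg_atBot_atTop
  have hDnonneg : ∀ b : ℝ, 0 ≤ ∫ z, relu (z + b) ^ 2 * phi z := fun b =>
    integral_nonneg fun z => mul_nonneg (sq_nonneg _) (phi_pos z).le
  refine tendsto_of_tendsto_of_tendsto_of_le_of_le tendsto_const_nhds hG0 ?_ ?_
  · intro b
    exact div_nonneg (Finset.sum_nonneg fun _ _ => sq_nonneg _) (hDnonneg b)
  · intro b
    dsimp only
    have hCS : ∀ k ∈ Finset.range (t + 1),
        (∫ z, relu (z + b) * (Polynomial.aeval z (Polynomial.hermite k))
            / Real.sqrt (Nat.factorial k) * phi z) ^ 2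
        ≤ (∫ z, relu (z + b) ^ 2 * phi z) * T k b :=
      fun k _ => coeff_sq_le b k _
    rcases (hDnonneg b).eq_or_lt with h | h
    · have hN : (∑ k ∈ Finset.range (t + 1),
          (∫ z, relu (z + b) * (Polynomial.aeval z (Polynomial.hermite k))
              / Real.sqrt (Nat.factorial k) * phi z) ^ 2) = 0 := by
        refine le_antisymm ?_ (Finset.sum_nonneg fun _ _ => sq_nonneg _)
        calc _ ≤ ∑ k ∈ Finset.range (t + 1),
              (∫ z, relu (z + b) ^ 2 * phi z) * T k b := Finset.sum_le_sum hCS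
          _ = 0 := by
            rw [← h]
            simp
      rw [hN, zero_div]
      exact Finset.sum_nonneg fun k _ => hTnonneg k b
    · rw [div_le_iff₀ h]
      calc _ ≤ ∑ k ∈ Finset.range (t + 1),
            (∫ z, relu (z + b) ^ 2 * phi z) * T k b := Finset.sum_le_sum hCS
        _ = G b * (∫ z, relu (z + b) ^ 2 * phi z) := by
          rw [hGdef, Finset.sum_mul]
          exact Finset.sum_congr rfl fun k _ => mul_comm _ _
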